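/- Relative completeness of Outcome Logic: for every program C and all outcome assertions φ, ψ, if the triple ⟨φ⟩C⟨ψ⟩ is semantically valid (⊨ ⟨φ⟩C⟨ψ⟩), then it is derivable in the Outcome Logic proof system (Ω ⊢ ⟨φ⟩C⟨ψ⟩). -/

import Mathlib

open scoped Classical

universe u v

/-- A semiring that is simultaneously a complete lattice with bottom `0`, whose order
coincides with the natural (additive) order, and in which addition and multiplication
are Scott-continuous. -/
class OLSemiring (U : Type u) extends Semiring U, CompleteLattice U where
  bot_eq_zero : (⊥ : U) = 0
  le_iff_exists_add : ∀ a b : U, a ≤ b ↔ ∃ c, a + c = b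
  add_scott : ∀ (D : Set U), D.Nonempty → DirectedOn (· ≤ ·) D → ∀ y : U,
    sSup ((fun x => x + y) '' D) = sSup D + y
  mul_scott_right : ∀ (D : Set U), D.Nonempty → DirectedOn (· ≤ ·) D → ∀ y : U,
    sSup ((fun x => x * y) '' D) = sSup D * y
  mul_scott_left : ∀ (D : Set U), D.Nonempty → DirectedOn (· ≤ ·) D → ∀ y : U,
    sSup ((fun x => y * x) '' D) = y * sSup D

variable {U : Type u} [OLSemiring U]

/-- Infinite sum: supremum over finite subfamilies of finite sums. -/
noncomputable def wsum {I : Type v} (f : I → U) : U :=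
  ⨆ J : Finset I, ∑ i ∈ J, f i

/-- The unit of the weighting monad. -/
noncomputable def eta {X : Type u} (x : X) : X → U :=
  fun y => if y = x then 1 else 0

/-- Kleisli extension: `kext f m y = ∑_{x ∈ supp m} m x * f x y`. -/
noncomputable def kext {X Y : Type u} (f : X → Y → U) (m : X → U) : Y → U :=
  fun y => wsum (fun x : Function.support m => m x.1 * f x.1 y)

/-- Syntax of tests over primitive tests indexed by `TI`. -/
inductive TestExpr (TI : Type u) : Type u where
  | prim (t : TI)
  | tt
  | ff
  | and (b₁ b₂ : TestExpr TI)
  | or (b₁ b₂ : TestExpr TI)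
  | not (b : TestExpr TI)

/-- The set of states at which a test is true. -/
def testSet {St TI : Type u} (tsem : TI → Set St) : TestExpr TI → Set St
  | .prim t => tsem t
  | .tt => Set.univ
  | .ff => ∅
  | .and b₁ b₂ => testSet tsem b₁ ∩ testSet tsem b₂
  | .or b₁ b₂ => testSet tsem b₁ ∪ testSet tsem b₂
  | .not b => (testSet tsem b)ᶜ

/-- Expressions: a test or a weight. -/
inductive Expr (U : Type u) (TI : Type u) : Type u where
  | test (b : TestExpr TI)
  | wt (u : U)

/-- Evaluation of expressions into weights. -/
noncomputable def eeval {St TI : Type u} (tsem : TI → Set St) : Expr U TI → St → U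
  | .test b => fun σ => if σ ∈ testSet tsem b then 1 else 0
  | .wt u => fun _ => u

/-- Programs. -/
inductive Prog (U St TI Act : Type u) : Type u where
  | skip
  | seq (C₁ C₂ : Prog U St TI Act)
  | choice (C₁ C₂ : Prog U St TI Act)
  | assume (e : Expr U TI)
  | iter (C : Prog U St TI Act) (e e' : Expr U TI)
  | act (a : Act)

/-- The characteristic function of iteration. -/
noncomputable def Phi {St : Type u} (w w' : St → U) (g : St → St → U)
    (f : St → St → U) : St → St → U :=
  fun σ τ => w σ * kext f (g σ) τ + w' σ * eta σ τ

/-- Denotational semantics of programs. -/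
noncomputable def sem {St TI Act : Type u} (tsem : TI → Set St)
    (asem : Act → St → St → U) : Prog U St TI Act → St → St → U
  | .skip => fun σ => eta σ
  | .seq C₁ C₂ => fun σ => kext (sem tsem asem C₂) (sem tsem asem C₁ σ)
  | .choice C₁ C₂ => fun σ τ => sem tsem asem C₁ σ τ + sem tsem asem C₂ σ τ
  | .assume e => fun σ τ => eeval tsem e σ * eta σ τ
  | .iter C e e' =>
      ⨆ n : ℕ, (Phi (eeval tsem e) (eeval tsem e') (sem tsem asem C))^[n] (fun _ _ => 0)
  | .act a => asem a

/-- Outcome assertions. -/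
abbrev OA (U : Type u) (St : Type u) := Set (St → U)

/-- Binary outcome conjunction. -/
def oplus {St : Type u} (φ ψ : OA U St) : OA U St :=
  { m | ∃ m₁ ∈ φ, ∃ m₂ ∈ ψ, m = fun σ => m₁ σ + m₂ σ }

/-- Indexed outcome conjunction. -/
noncomputable def bigOplus {St T : Type u} (φ : T → OA U St) : OA U St :=
  { m | ∃ f : T → St → U, (∀ t, f t ∈ φ t) ∧ m = fun σ => wsum (fun t => f t σ) }

/-- Right scaling of an assertion by a weight. -/
def odotR {St : Type u} (φ : OA U St) (u : U) : OA U St :=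
  { m' | ∃ m ∈ φ, m' = fun σ => m σ * u }

/-- Left scaling of an assertion by a weight. -/
def odotL {St : Type u} (u : U) (φ : OA U St) : OA U St :=
  { m' | ∃ m ∈ φ, m' = fun σ => u * m σ }

/-- `φ ⊨ e = u` : the expression `e` evaluates to `u` on the support of every `m ∈ φ`. -/
def entailsEq {St TI : Type u} (tsem : TI → Set St) (φ : OA U St)
    (e : Expr U TI) (u : U) : Prop :=
  ∀ m ∈ φ, ∀ σ, m σ ≠ 0 → eeval tsem e σ = u

/-- Semantic validity of an outcome triple. -/
def valid {St TI Act : Type u} (tsem : TI → Set St) (asem : Act → St → St → U)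
    (φ : OA U St) (C : Prog U St TI Act) (ψ : OA U St) : Prop :=
  ∀ m ∈ φ, kext (sem tsem asem C) m ∈ ψ

/-- The family `ψ` of assertions converges to `ψlim`. -/
def convergesTo {St : Type u} (ψ : ℕ → OA U St) (ψlim : OA U St) : Prop :=
  ∀ ms : ℕ → St → U, (∀ n, ms n ∈ ψ n) → (fun σ => wsum (fun n => ms n σ)) ∈ ψlim

/-- The Outcome Logic proof system (with oracle axioms for valid atomic triples). -/
inductive Deriv {St TI Act : Type u} (tsem : TI → Set St) (asem : Act → St → St → U) :
    OA U St → Prog U St TI Act → OA U St → Prop where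
  | atom {φ ψ} (a : Act) :
      valid tsem asem φ (.act a) ψ → Deriv tsem asem φ (.act a) ψ
  | skip (φ) : Deriv tsem asem φ .skip φ
  | seq {φ ϑ ψ C₁ C₂} :
      Deriv tsem asem φ C₁ ϑ → Deriv tsem asem ϑ C₂ ψ →
      Deriv tsem asem φ (.seq C₁ C₂) ψ
  | plus {φ ψ₁ ψ₂ C₁ C₂} :
      Deriv tsem asem φ C₁ ψ₁ → Deriv tsem asem φ C₂ ψ₂ →
      Deriv tsem asem φ (.choice C₁ C₂) (oplus ψ₁ ψ₂)
  | assume {φ e u} :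
      entailsEq tsem φ e u → Deriv tsem asem φ (.assume e) (odotR φ u)
  | iter {C e e'} (φn ψn : ℕ → OA U St) (ψlim : OA U St) :
      convergesTo ψn ψlim →
      (∀ n, Deriv tsem asem (φn n) (.seq (.assume e) C) (φn (n + 1))) →
      (∀ n, Deriv tsem asem (φn n) (.assume e') (ψn n)) →
      Deriv tsem asem (φn 0) (.iter C e e') ψlim
  | false (C φ) : Deriv tsem asem ∅ C φ
  | true (C φ) : Deriv tsem asem φ C Set.univ
  | scale {φ ψ C} (u : U) :
      Deriv tsem asem φ C ψ → Deriv tsem asem (odotL u φ) C (odotL u ψ)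
  | disj {φ₁ φ₂ ψ₁ ψ₂ C} :
      Deriv tsem asem φ₁ C ψ₁ → Deriv tsem asem φ₂ C ψ₂ →
      Deriv tsem asem (φ₁ ∪ φ₂) C (ψ₁ ∪ ψ₂)
  | conj {φ₁ φ₂ ψ₁ ψ₂ C} :
      Deriv tsem asem φ₁ C ψ₁ → Deriv tsem asem φ₂ C ψ₂ →
      Deriv tsem asem (φ₁ ∩ φ₂) C (ψ₁ ∩ ψ₂)
  | choice {T : Type u} {C} (φ φ' : T → OA U St) :
      (∀ t, Deriv tsem asem (φ t) C (φ' t)) →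
      Deriv tsem asem (bigOplus φ) C (bigOplus φ')
  | exists_ {T : Type u} {C} (φ φ' : T → OA U St) :
      (∀ t, Deriv tsem asem (φ t) C (φ' t)) →
      Deriv tsem asem (⋃ t, φ t) C (⋃ t, φ' t)
  | conseq {φ φ' ψ ψ' C} :
      φ' ⊆ φ → Deriv tsem asem φ C ψ → ψ ⊆ ψ' →
      Deriv tsem asem φ' C ψ'

section Infra

variable {U : Type u} [OLSemiring U]

lemma zle (a : U) : 0 ≤ a := by
  rw [← OLSemiring.bot_eq_zero]; exact bot_le

instance : IsOrderedAddMonoid U :=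
  {
    add_le_add_left := fun a b hab c => by
      obtain ⟨d, hd⟩ := (OLSemiring.le_iff_exists_add a b).1 hab
      exact (OLSemiring.le_iff_exists_add _ _).2 ⟨d, by rw [add_right_comm, hd]⟩ }

lemma psum_mono {I : Type v} {f : I → U} {J K : Finset I} (h : J ⊆ K) :
    ∑ i ∈ J, f i ≤ ∑ i ∈ K, f i :=
  Finset.sum_le_sum_of_subset_of_nonneg h (fun _ _ _ => zle _)

lemma le_wsum {I : Type v} (f : I → U) (J : Finset I) : ∑ i ∈ J, f i ≤ wsum f :=
  le_iSup (fun J : Finset I => ∑ i ∈ J, f i) J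

lemma wsum_le {I : Type v} {f : I → U} {c : U} (h : ∀ J : Finset I, ∑ i ∈ J, f i ≤ c) :
    wsum f ≤ c := iSup_le h

lemma wsum_mono {I : Type v} {f g : I → U} (h : ∀ i, f i ≤ g i) : wsum f ≤ wsum g :=
  wsum_le fun J => (Finset.sum_le_sum fun i _ => h i).trans (le_wsum g J)

lemma wsum_congr {I : Type v} {f g : I → U} (h : ∀ i, f i = g i) : wsum f = wsum g := by
  have : f = g := funext h
  rw [this]

lemma wsum_zero {I : Type v} : wsum (fun _ : I => (0 : U)) = 0 :=
  le_antisymm (wsum_le fun J => by simp) (zle _)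

lemma wsum_op {I : Type v} (f : I → U) (op : U → U)
    (hop : ∀ D : Set U, D.Nonempty → DirectedOn (· ≤ ·) D → sSup (op '' D) = op (sSup D)) :
    op (wsum f) = ⨆ J : Finset I, op (∑ i ∈ J, f i) := by
  set g : Finset I → U := fun J => ∑ i ∈ J, f i with hg
  have hdir : DirectedOn (· ≤ ·) (Set.range g) := by
    rintro _ ⟨J, rfl⟩ _ ⟨K, rfl⟩
    exact ⟨g (J ∪ K), ⟨J ∪ K, rfl⟩, psum_mono Finset.subset_union_left,
      psum_mono Finset.subset_union_right⟩
  have h := hop (Set.range g) ⟨g ∅, ⟨∅, rfl⟩⟩ hdir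
  rw [← Set.range_comp] at h
  simp only [Function.comp_def] at h
  rw [show wsum f = sSup (Set.range g) from (sSup_range).symm,
    show (⨆ J : Finset I, op (g J)) = sSup (Set.range fun J => op (g J)) from (sSup_range).symm]
  exact h.symm

lemma mul_wsum {I : Type v} (u : U) (f : I → U) :
    u * wsum f = wsum (fun i => u * f i) := by
  have h := wsum_op f (fun x => u * x)
    (fun D hne hdir => OLSemiring.mul_scott_left D hne hdir u)
  beta_reduce at h
  rw [h]
  exact iSup_congr fun J => by rw [Finset.mul_sum]

lemma wsum_mul {I : Type v} (f : I → U) (u : U) :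
    wsum f * u = wsum (fun i => f i * u) := by
  have h := wsum_op f (fun x => x * u)
    (fun D hne hdir => OLSemiring.mul_scott_right D hne hdir u)
  beta_reduce at h
  rw [h]
  exact iSup_congr fun J => by rw [Finset.sum_mul]

lemma wsum_add_iSup {I : Type v} (f : I → U) (y : U) :
    wsum f + y = ⨆ J : Finset I, (∑ i ∈ J, f i + y) :=
  wsum_op f (fun x => x + y) (fun D hne hdir => OLSemiring.add_scott D hne hdir y)

lemma add_wsum {I : Type v} (f g : I → U) :
    wsum f + wsum g = wsum (fun i => f i + g i) := by
  refine le_antisymm ?_ (wsum_le fun J => ?_)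
  · rw [wsum_add_iSup f (wsum g)]
    refine iSup_le fun J => ?_
    rw [add_comm, wsum_add_iSup g]
    refine iSup_le fun K => ?_
    calc ∑ i ∈ K, g i + ∑ i ∈ J, f i
        = ∑ i ∈ J, f i + ∑ i ∈ K, g i := add_comm _ _
      _ ≤ ∑ i ∈ J ∪ K, f i + ∑ i ∈ J ∪ K, g i :=
          add_le_add (psum_mono Finset.subset_union_left) (psum_mono Finset.subset_union_right)
      _ = ∑ i ∈ J ∪ K, (f i + g i) := Finset.sum_add_distrib.symm
      _ ≤ wsum (fun i => f i + g i) := le_wsum _ _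
  · rw [Finset.sum_add_distrib]
    exact add_le_add (le_wsum f J) (le_wsum g J)

lemma wsum_finsum {I : Type v} {κ : Type*} (K : Finset κ) (h : κ → I → U) :
    wsum (fun i => ∑ k ∈ K, h k i) = ∑ k ∈ K, wsum (h k) := by
  induction K using Finset.cons_induction with
  | empty => simpa using wsum_zero
  | cons a s ha ih =>
    rw [Finset.sum_cons, ← ih, add_wsum]
    exact wsum_congr fun i => by rw [Finset.sum_cons]

lemma wsum_embed {I : Type*} {J : Type*} (e : I → J) (he : Function.Injective e)
    (f : J → U) (hf : ∀ j, (∀ i, e i ≠ j) → f j = 0) :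
    wsum (fun i => f (e i)) = wsum f := by
  refine le_antisymm (wsum_le fun K => ?_) (wsum_le fun L => ?_)
  · calc ∑ i ∈ K, f (e i) = ∑ j ∈ K.map ⟨e, he⟩, f j := (Finset.sum_map K ⟨e, he⟩ f).symm
      _ ≤ wsum f := le_wsum _ _
  · rw [← Finset.sum_preimage e L he.injOn f
      (fun x _ hr => hf x (fun i hi => hr ⟨i, hi⟩))]
    exact le_wsum _ _

lemma wsum_single {X : Type v} (f : X → U) (x₀ : X) (h : ∀ x, x ≠ x₀ → f x = 0) :
    wsum f = f x₀ := by
  refine le_antisymm (wsum_le fun J => ?_) ?_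
  · calc ∑ x ∈ J, f x = ∑ x ∈ J, (if x = x₀ then f x₀ else 0) :=
          Finset.sum_congr rfl fun x _ => by
            by_cases hx : x = x₀
            · subst hx; simp
            · simp [hx, h x hx]
      _ = if x₀ ∈ J then f x₀ else 0 := Finset.sum_ite_eq' J x₀ (fun _ => f x₀)
      _ ≤ f x₀ := by split <;> [exact le_rfl; exact zle _]
  · simpa using le_wsum f {x₀}

lemma wsum_swap {I : Type*} {J : Type*} (f : I × J → U) :
    wsum (fun p : J × I => f p.swap) = wsum f := by
  refine wsum_embed Prod.swap (fun a b hab => ?_) f (fun p hp => absurd rfl (hp p.swap))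
  · simpa using congrArg Prod.swap hab

lemma wsum_wsum {I : Type*} {J : Type*} (f : I → J → U) :
    wsum (fun i => wsum (f i)) = wsum (fun p : I × J => f p.1 p.2) := by
  refine le_antisymm (wsum_le fun K => ?_) (wsum_le fun P => ?_)
  · have key : ∀ K : Finset I, ∑ i ∈ K, wsum (f i) ≤
        wsum (fun p : I × J => if p.1 ∈ K then f p.1 p.2 else 0) := by
      intro K
      induction K using Finset.cons_induction with
      | empty => simpa using zle _
      | cons a s ha ih =>
        rw [Finset.sum_cons]
        have h1 : wsum (f a) = wsum (fun p : I × J => if p.1 = a then f p.1 p.2 else 0) := by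
          rw [← wsum_embed (fun j => (a, j)) (fun x y hxy => congrArg Prod.snd hxy)
            (fun p : I × J => if p.1 = a then f p.1 p.2 else 0)
            (fun p hp => by
              by_cases h : p.1 = a
              · exact absurd (Prod.ext h.symm rfl : (a, p.2) = p) (hp p.2)
              · simp [h])]
          exact wsum_congr fun j => by simp
        calc wsum (f a) + ∑ i ∈ s, wsum (f i)
            ≤ wsum (f a) + wsum (fun p : I × J => if p.1 ∈ s then f p.1 p.2 else 0) :=
              add_le_add_right ih _
          _ = wsum (fun p : I × J => (if p.1 = a then f p.1 p.2 else 0) +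
                (if p.1 ∈ s then f p.1 p.2 else 0)) := by rw [h1, add_wsum]
          _ = wsum (fun p : I × J => if p.1 ∈ Finset.cons a s ha then f p.1 p.2 else 0) := by
              refine wsum_congr fun p => ?_
              by_cases h2 : p.1 = a
              · simp [h2, ha, Finset.mem_cons]
              · by_cases h3 : p.1 ∈ s <;> simp [h2, h3, Finset.mem_cons]
    exact (key K).trans (wsum_mono fun p => by split <;> [exact le_rfl; exact zle _])
  · have hsub : P ⊆ (P.image Prod.fst) ×ˢ (P.image Prod.snd) := by
      intro p hp
      rw [Finset.mem_product]
      exact ⟨Finset.mem_image_of_mem _ hp, Finset.mem_image_of_mem _ hp⟩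
    calc ∑ p ∈ P, f p.1 p.2 ≤ ∑ p ∈ (P.image Prod.fst) ×ˢ (P.image Prod.snd), f p.1 p.2 :=
          psum_mono hsub
      _ = ∑ i ∈ P.image Prod.fst, ∑ j ∈ P.image Prod.snd, f i j := Finset.sum_product _ _ _
      _ ≤ ∑ i ∈ P.image Prod.fst, wsum (f i) :=
          Finset.sum_le_sum fun i _ => le_wsum (f i) _
      _ ≤ wsum (fun i => wsum (f i)) := le_wsum _ _

lemma wsum_comm {I : Type*} {J : Type*} (f : I → J → U) :
    wsum (fun i => wsum (fun j => f i j)) = wsum (fun j => wsum (fun i => f i j)) := by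
  rw [wsum_wsum, wsum_wsum (fun j i => f i j), ← wsum_swap (fun p : I × J => f p.1 p.2)]
  rfl

lemma wsum_nat (g : ℕ → U) : (⨆ n, ∑ k ∈ Finset.range n, g k) = wsum g := by
  refine le_antisymm (iSup_le fun n => le_wsum g _) (wsum_le fun J => ?_)
  have : J ⊆ Finset.range (J.sup id + 1) := by
    intro j hj
    exact Finset.mem_range.2 (Nat.lt_succ_of_le (Finset.le_sup (f := id) hj))
  exact (psum_mono this).trans (le_iSup (fun n => ∑ k ∈ Finset.range n, g k) _)

end Infra
section Kext

variable {U : Type u} [OLSemiring U]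

lemma kext_eq {X Y : Type u} (f : X → Y → U) (m : X → U) (y : Y) :
    kext f m y = wsum (fun x => m x * f x y) := by
  unfold kext
  refine wsum_embed (fun x : Function.support m => (x : X)) Subtype.val_injective
    (fun x => m x * f x y) (fun x hx => ?_)
  have hm : m x = 0 := by
    by_contra hc
    exact hx ⟨x, hc⟩ rfl
  show m x * f x y = 0
  rw [hm, zero_mul]

lemma kext_eta_right {X Y : Type u} (f : X → Y → U) (σ : X) (y : Y) :
    kext f (eta σ) y = f σ y := by
  rw [kext_eq]
  rw [wsum_single (U := U) (fun x => eta σ x * f x y) σ (fun x hx => by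
    simp [eta, hx])]
  simp [eta]

lemma kext_eta_left {X : Type u} (m : X → U) (y : X) :
    kext (fun x => eta x) m y = m y := by
  rw [kext_eq]
  rw [wsum_single (U := U) (fun x => m x * eta x y) y (fun x hx => by
    simp [eta, Ne.symm hx])]
  simp [eta]

lemma kext_kext {X Y Z : Type u} (g : Y → Z → U) (f : X → Y → U) (m : X → U) (z : Z) :
    kext g (kext f m) z = kext (fun x => kext g (f x)) m z := by
  calc kext g (kext f m) z
      = wsum (fun y => kext f m y * g y z) := kext_eq _ _ _
    _ = wsum (fun y => wsum (fun x => (m x * f x y) * g y z)) :=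
        wsum_congr fun y => by rw [kext_eq, wsum_mul]
    _ = wsum (fun x => wsum (fun y => (m x * f x y) * g y z)) :=
        wsum_comm fun y x => (m x * f x y) * g y z
    _ = wsum (fun x => m x * kext g (f x) z) := by
        refine wsum_congr fun x => ?_
        rw [kext_eq, mul_wsum]
        exact wsum_congr fun y => mul_assoc _ _ _
    _ = kext (fun x => kext g (f x)) m z := (kext_eq _ _ _).symm

lemma kext_add {X Y : Type u} (f₁ f₂ : X → Y → U) (m : X → U) (y : Y) :
    kext (fun x τ => f₁ x τ + f₂ x τ) m y = kext f₁ m y + kext f₂ m y := by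
  rw [kext_eq, kext_eq, kext_eq, add_wsum]
  exact wsum_congr fun x => (mul_add _ _ _)

lemma kext_scale {X Y : Type u} (f : X → Y → U) (u : U) (m : X → U) (y : Y) :
    kext f (fun x => u * m x) y = u * kext f m y := by
  rw [kext_eq, kext_eq, mul_wsum]
  exact wsum_congr fun x => mul_assoc _ _ _

end Kext
section DerivLemmas

lemma eta_comm {X : Type u} {U : Type u} [OLSemiring U] (σ τ : X) (u : U) :
    eta σ τ * u = u * eta σ τ := by
  unfold eta
  split <;> simp

/-- The most precise triple for `assume` at a singleton precondition. -/
lemma assume_precise {U St TI Act : Type u} [OLSemiring U]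
    (tsem : TI → Set St) (asem : Act → St → St → U) (e : Expr U TI) (m : St → U) :
    Deriv tsem asem {m} (.assume e) {kext (sem tsem asem (.assume e)) m} := by
  have base : ∀ σ : St, Deriv tsem asem {fun τ => m σ * eta σ τ} (.assume e)
      {fun τ => m σ * (eta σ τ * eeval tsem e σ)} := by
    intro σ
    have h1 : Deriv tsem asem {eta σ} (.assume e) (odotR {eta σ} (eeval tsem e σ)) := by
      refine Deriv.assume ?_
      intro m' hm' τ hτ
      rw [Set.mem_singleton_iff] at hm'
      subst hm'
      have hτσ : τ = σ := by
        by_contra hc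
        exact hτ (by simp [eta, hc])
      rw [hτσ]
    have h2 := Deriv.scale (m σ) h1
    refine Deriv.conseq ?_ h2 ?_
    · intro x hx
      rw [Set.mem_singleton_iff] at hx
      exact ⟨eta σ, rfl, hx⟩
    · rintro x ⟨n, ⟨n', hn', rfl⟩, rfl⟩
      rw [Set.mem_singleton_iff] at hn'
      subst hn'
      rfl
  have hch := Deriv.choice (fun σ : St => {fun τ => m σ * eta σ τ})
    (fun σ : St => {fun τ => m σ * (eta σ τ * eeval tsem e σ)}) base
  refine Deriv.conseq ?_ hch ?_
  · intro x hx
    rw [Set.mem_singleton_iff] at hx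
    refine ⟨fun σ τ => m σ * eta σ τ, fun σ => rfl, ?_⟩
    rw [hx]
    funext τ
    rw [wsum_single (fun σ => m σ * eta σ τ) τ (fun σ hσ => by simp [eta, Ne.symm hσ])]
    simp [eta]
  · rintro x ⟨f, hf, rfl⟩
    rw [Set.mem_singleton_iff]
    funext τ
    rw [kext_eq]
    refine wsum_congr fun σ => ?_
    rw [hf σ]
    show m σ * (eta σ τ * eeval tsem e σ) = m σ * (eeval tsem e σ * eta σ τ)
    rw [eta_comm]

end DerivLemmas
section Key

/-- The distribution of traces that exit the loop after exactly `k` iterations. -/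
noncomputable def Dk {U St : Type u} [OLSemiring U] (w w' : St → U) (g : St → St → U) :
    ℕ → St → St → U
  | 0 => fun σ τ => w' σ * eta σ τ
  | (k+1) => fun σ τ => w σ * kext (Dk w w' g k) (g σ) τ

/-- Iterated Kleisli extension of `h` starting from `m`. -/
noncomputable def mseq {U St : Type u} [OLSemiring U] (h : St → St → U) (m : St → U) :
    ℕ → St → U
  | 0 => m
  | (n+1) => kext h (mseq h m n)

lemma iterPhi {U St : Type u} [OLSemiring U] (w w' : St → U) (g : St → St → U) :
    ∀ (n : ℕ) (σ τ : St), (Phi w w' g)^[n] (fun _ _ => 0) σ τ =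
      ∑ k ∈ Finset.range n, Dk w w' g k σ τ := by
  intro n
  induction n with
  | zero => intro σ τ; simp
  | succ n ih =>
    intro σ τ
    rw [Function.iterate_succ_apply']
    have hF : (Phi w w' g)^[n] (fun _ _ => 0) =
        fun σ τ => ∑ k ∈ Finset.range n, Dk w w' g k σ τ :=
      funext fun σ => funext fun τ => ih σ τ
    rw [hF]
    show w σ * kext (fun σ τ => ∑ k ∈ Finset.range n, Dk w w' g k σ τ) (g σ) τ
        + w' σ * eta σ τ = _
    have hk : kext (fun σ τ => ∑ k ∈ Finset.range n, Dk w w' g k σ τ) (g σ) τ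
        = ∑ k ∈ Finset.range n, kext (Dk w w' g k) (g σ) τ := by
      rw [kext_eq]
      calc wsum (fun x => g σ x * ∑ k ∈ Finset.range n, Dk w w' g k x τ)
          = wsum (fun x => ∑ k ∈ Finset.range n, g σ x * Dk w w' g k x τ) :=
            wsum_congr fun x => Finset.mul_sum _ _ _
        _ = ∑ k ∈ Finset.range n, wsum (fun x => g σ x * Dk w w' g k x τ) :=
            wsum_finsum _ _
        _ = ∑ k ∈ Finset.range n, kext (Dk w w' g k) (g σ) τ :=
            Finset.sum_congr rfl fun k _ => (kext_eq _ _ _).symm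
    rw [hk, Finset.sum_range_succ', Finset.mul_sum]
    rfl

set_option maxHeartbeats 1600000 in
theorem key_triple {U St TI Act : Type u} [OLSemiring U]
    (tsem : TI → Set St) (asem : Act → St → St → U) (C : Prog U St TI Act) :
    ∀ m : St → U, Deriv tsem asem {m} C {kext (sem tsem asem C) m} := by
  induction C with
  | skip =>
    intro m
    refine Deriv.conseq subset_rfl (Deriv.skip {m}) (Set.singleton_subset_iff.2 ?_)
    rw [Set.mem_singleton_iff]
    exact funext fun y => (kext_eta_left m y).symm
  | seq C₁ C₂ ih₁ ih₂ =>
    intro m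
    have d := Deriv.seq (ih₁ m) (ih₂ (kext (sem tsem asem C₁) m))
    refine Deriv.conseq subset_rfl d (Set.singleton_subset_iff.2 ?_)
    rw [Set.mem_singleton_iff]
    funext y
    exact kext_kext _ _ _ _
  | choice C₁ C₂ ih₁ ih₂ =>
    intro m
    have d := Deriv.plus (ih₁ m) (ih₂ m)
    refine Deriv.conseq subset_rfl d ?_
    rintro x ⟨m₁, hm₁, m₂, hm₂, rfl⟩
    rw [Set.mem_singleton_iff] at hm₁ hm₂
    subst hm₁; subst hm₂
    rw [Set.mem_singleton_iff]
    funext y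
    exact (kext_add _ _ _ _).symm
  | assume e =>
    intro m
    exact assume_precise tsem asem e m
  | act a =>
    intro m
    refine Deriv.atom a ?_
    intro m' hm'
    rw [Set.mem_singleton_iff] at hm'
    subst hm'
    rfl
  | iter C e e' ih =>
    intro m
    have hstep : ∀ (k : ℕ) (σ : St) (τ : St),
        kext (Dk (eeval tsem e) (eeval tsem e') (sem tsem asem C) k)
          (sem tsem asem (Prog.seq (.assume e) C) σ) τ
        = Dk (eeval tsem e) (eeval tsem e') (sem tsem asem C) (k+1) σ τ := by
      intro k σ τ
      show kext _ (kext (sem tsem asem C) (fun x => eeval tsem e σ * eta σ x)) τ = _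
      rw [kext_kext, kext_scale, kext_eta_right]
      rfl
    have hshift : ∀ (n k : ℕ) (τ : St),
        kext (Dk (eeval tsem e) (eeval tsem e') (sem tsem asem C) k)
          (mseq (sem tsem asem (Prog.seq (.assume e) C)) m n) τ
        = kext (Dk (eeval tsem e) (eeval tsem e') (sem tsem asem C) (k + n)) m τ := by
      intro n
      induction n with
      | zero => intro k τ; rfl
      | succ n ihn =>
        intro k τ
        show kext _ (kext (sem tsem asem (Prog.seq (.assume e) C))
          (mseq (sem tsem asem (Prog.seq (.assume e) C)) m n)) τ = _
        rw [kext_kext]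
        have : (fun σ => kext (Dk (eeval tsem e) (eeval tsem e') (sem tsem asem C) k)
            (sem tsem asem (Prog.seq (.assume e) C) σ))
            = Dk (eeval tsem e) (eeval tsem e') (sem tsem asem C) (k+1) :=
          funext fun σ => funext fun τ => hstep k σ τ
        rw [this, ihn (k+1)]
        have hkn : k + 1 + n = k + (n + 1) := by omega
        rw [hkn]
    refine Deriv.iter
      (fun n => {mseq (sem tsem asem (Prog.seq (.assume e) C)) m n})
      (fun n => {kext (sem tsem asem (.assume e'))
        (mseq (sem tsem asem (Prog.seq (.assume e) C)) m n)})
      {kext (sem tsem asem (.iter C e e')) m} ?_ ?_ ?_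
    · -- convergence
      intro ms hms
      rw [Set.mem_singleton_iff]
      funext τ
      calc wsum (fun n => ms n τ)
          = wsum (fun n => kext (Dk (eeval tsem e) (eeval tsem e') (sem tsem asem C) n) m τ) := by
            refine wsum_congr fun n => ?_
            rw [hms n]
            have := hshift n 0 τ
            rw [Nat.zero_add] at this
            exact this
        _ = wsum (fun n => wsum (fun x =>
              m x * Dk (eeval tsem e) (eeval tsem e') (sem tsem asem C) n x τ)) :=
            wsum_congr fun n => kext_eq _ _ _
        _ = wsum (fun x => wsum (fun n =>
              m x * Dk (eeval tsem e) (eeval tsem e') (sem tsem asem C) n x τ)) :=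
            wsum_comm (fun n x => m x * Dk (eeval tsem e) (eeval tsem e') (sem tsem asem C) n x τ)
        _ = wsum (fun x => m x * sem tsem asem (.iter C e e') x τ) := by
            refine wsum_congr fun x => ?_
            rw [← mul_wsum]
            congr 1
            show wsum (fun n => Dk (eeval tsem e) (eeval tsem e') (sem tsem asem C) n x τ)
              = (⨆ n, (Phi (eeval tsem e) (eeval tsem e') (sem tsem asem C))^[n]
                  (fun _ _ => 0)) x τ
            rw [iSup_apply, iSup_apply, ← wsum_nat]
            exact iSup_congr fun n => (iterPhi _ _ _ n x τ).symm
        _ = kext (sem tsem asem (.iter C e e')) m τ := (kext_eq _ _ _).symm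
    · -- assume e ; C step
      intro n
      have d := Deriv.seq
        (assume_precise tsem asem e (mseq (sem tsem asem (Prog.seq (.assume e) C)) m n))
        (ih (kext (sem tsem asem (.assume e))
          (mseq (sem tsem asem (Prog.seq (.assume e) C)) m n)))
      refine Deriv.conseq subset_rfl d (Set.singleton_subset_iff.2 ?_)
      rw [Set.mem_singleton_iff]
      show _ = mseq (sem tsem asem (Prog.seq (.assume e) C)) m (n+1)
      funext y
      exact kext_kext _ _ _ _
    · intro n
      exact assume_precise tsem asem e' _

end Key
/-- **Relative completeness of Outcome Logic**: every semantically valid triple is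
derivable from the oracle `Ω` of valid atomic triples. -/
theorem outcome_logic_completeness {U St TI Act : Type u} [OLSemiring U]
    (tsem : TI → Set St) (asem : Act → St → St → U)
    (C : Prog U St TI Act) (φ ψ : OA U St)
    (h : valid tsem asem φ C ψ) :
    Deriv tsem asem φ C ψ := by
  refine Deriv.conseq ?_
    (Deriv.exists_ (T := {m : St → U // m ∈ φ}) (fun t => {t.1})
      (fun t => {kext (sem tsem asem C) t.1})
      (fun t => key_triple tsem asem C t.1)) ?_
  · intro m hm
    exact Set.mem_iUnion.2 ⟨⟨m, hm⟩, rfl⟩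
  · intro x hx
    obtain ⟨t, ht⟩ := Set.mem_iUnion.1 hx
    rw [Set.mem_singleton_iff] at ht
    subst ht
    exact h t.1 t.2
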